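/- Let λ be a probability distribution on {1,...,n}, D_λ the diagonal matrix with entries λ_i, |ψ⟩ = Σ_i √λ_i |i⟩, and let a, c be real numbers with -2 ≤ a < 0 and a + c + 1 ≥ 0. Then 1 + a D_λ + c |ψ⟩⟨ψ| is positive semidefinite. -/

import Mathlib

open Matrix

theorem chi_posSemidef_of_neg_a (n : ℕ) (lam : Fin n → ℝ)
    (hpos : ∀ i, 0 ≤ lam i) (hsum : ∑ i, lam i = 1)
    (a c : ℝ) (ha₁ : -2 ≤ a) (ha₂ : a < 0) (hac : a + c + 1 ≥ 0) :
    ((1 : Matrix (Fin n) (Fin n) ℝ) + a • Matrix.diagonal lam +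
      c • Matrix.of (fun i j => Real.sqrt (lam i * lam j))).PosSemidef := by
  rw [posSemidef_iff_dotProduct_mulVec]
  constructor
  · -- Hermitian
    ext i j
    simp only [conjTranspose_apply, Matrix.add_apply, Matrix.one_apply, Matrix.smul_apply,
      Matrix.diagonal_apply, Matrix.of_apply, star_trivial, smul_eq_mul, mul_comm (lam i)]
    rcases eq_or_ne i j with h | h
    · subst h; ring
    · simp [h, Ne.symm h]
  intro x
  simp only [star_trivial]
  set A := ∑ i, x i ^ 2 with hA
  set B := ∑ i, lam i * x i ^ 2 with hB
  set s := ∑ i, Real.sqrt (lam i) * x i with hs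
  have hsqrt : ∀ i j : Fin n, Real.sqrt (lam i * lam j)
      = Real.sqrt (lam i) * Real.sqrt (lam j) :=
    fun i j => Real.sqrt_mul (hpos i) _
  have hqf : dotProduct x
      (((1 : Matrix (Fin n) (Fin n) ℝ) + a • Matrix.diagonal lam +
        c • Matrix.of (fun i j => Real.sqrt (lam i * lam j))) *ᵥ x)
      = A + a * B + c * s ^ 2 := by
    have h1 : ∀ i, (((1 : Matrix (Fin n) (Fin n) ℝ) + a • Matrix.diagonal lam +
        c • Matrix.of (fun i j => Real.sqrt (lam i * lam j))) *ᵥ x) i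
        = x i + a * (lam i * x i) + c * (Real.sqrt (lam i) * s) := by
      intro i
      simp only [add_mulVec, smul_mulVec, one_mulVec, mulVec_diagonal,
        Pi.add_apply, Pi.smul_apply, smul_eq_mul]
      congr 1
      congr 1
      simp only [mulVec, dotProduct, Matrix.of_apply]
      rw [hs, Finset.mul_sum]
      refine Finset.sum_congr rfl fun j _ => ?_
      rw [hsqrt]; ring
    simp only [dotProduct, h1]
    have step1 : ∑ i, x i * (x i + a * (lam i * x i) + c * (Real.sqrt (lam i) * s))
        = ∑ i, (x i ^ 2 + a * (lam i * x i ^ 2) + c * ((Real.sqrt (lam i) * x i) * s)) :=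
      Finset.sum_congr rfl fun i _ => by ring
    rw [step1, Finset.sum_add_distrib, Finset.sum_add_distrib, ← Finset.mul_sum,
      ← Finset.mul_sum, ← Finset.sum_mul, ← hA, ← hB, ← hs, sq]
  rw [hqf]
  have hA0 : 0 ≤ A := Finset.sum_nonneg fun i _ => sq_nonneg _
  have hB0 : 0 ≤ B := Finset.sum_nonneg fun i _ => mul_nonneg (hpos i) (sq_nonneg _)
  have hS0 : 0 ≤ s ^ 2 := sq_nonneg _
  -- Cauchy-Schwarz: s^2 ≤ A
  have hSA : s ^ 2 ≤ A := by
    have h := Finset.sum_mul_sq_le_sq_mul_sq Finset.univ (fun i => Real.sqrt (lam i)) x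
    have heq : ∑ i, Real.sqrt (lam i) ^ 2 = 1 := by
      rw [← hsum]; exact Finset.sum_congr rfl fun i _ => Real.sq_sqrt (hpos i)
    rw [heq, one_mul] at h
    simpa [hs, hA] using h
  -- B ≤ A
  have hBA : B ≤ A := by
    refine Finset.sum_le_sum fun i _ => ?_
    have hle : lam i ≤ 1 := by
      rw [← hsum]
      exact Finset.single_le_sum (fun j _ => hpos j) (Finset.mem_univ i)
    nlinarith [sq_nonneg (x i)]
  -- key inequality: 4B ≤ 2A + 2s^2
  have hkey : 4 * B ≤ 2 * A + 2 * s ^ 2 := by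
    have hdouble : ∑ i, ∑ j, (Real.sqrt (lam j) * x i + Real.sqrt (lam i) * x j) ^ 2
        = 2 * A + 2 * s ^ 2 := by
      have expand : ∀ i j : Fin n,
          (Real.sqrt (lam j) * x i + Real.sqrt (lam i) * x j) ^ 2
          = lam j * x i ^ 2 + lam i * x j ^ 2
            + 2 * ((Real.sqrt (lam i) * x i) * (Real.sqrt (lam j) * x j)) := by
        intro i j
        have h1 : Real.sqrt (lam i) ^ 2 = lam i := Real.sq_sqrt (hpos i)
        have h2 : Real.sqrt (lam j) ^ 2 = lam j := Real.sq_sqrt (hpos j)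
        nlinarith [h1, h2]
      have e1 : ∑ i : Fin n, ∑ j : Fin n, lam j * x i ^ 2 = A := by
        have : ∀ i : Fin n, ∑ j : Fin n, lam j * x i ^ 2 = x i ^ 2 := by
          intro i
          rw [← Finset.sum_mul, hsum, one_mul]
        simp only [this, hA]
      have e2 : ∑ i : Fin n, ∑ j : Fin n, lam i * x j ^ 2 = A := by
        have : ∀ i : Fin n, ∑ j : Fin n, lam i * x j ^ 2 = lam i * A := by
          intro i
          rw [← Finset.mul_sum, hA]
        simp only [this]
        rw [← Finset.sum_mul, hsum, one_mul]
      have e3 : ∑ i : Fin n, ∑ j : Fin n,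
          (2 : ℝ) * ((Real.sqrt (lam i) * x i) * (Real.sqrt (lam j) * x j))
          = 2 * (s * s) := by
        have inner : ∀ i : Fin n, ∑ j : Fin n,
            (2 : ℝ) * ((Real.sqrt (lam i) * x i) * (Real.sqrt (lam j) * x j))
            = 2 * ((Real.sqrt (lam i) * x i) * s) := by
          intro i
          rw [← Finset.mul_sum, ← Finset.mul_sum, ← hs]
        simp only [inner]
        rw [← Finset.mul_sum, ← Finset.sum_mul, ← hs]
      calc ∑ i, ∑ j, (Real.sqrt (lam j) * x i + Real.sqrt (lam i) * x j) ^ 2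
          = ∑ i : Fin n, ∑ j : Fin n, (lam j * x i ^ 2 + lam i * x j ^ 2
            + 2 * ((Real.sqrt (lam i) * x i) * (Real.sqrt (lam j) * x j))) := by
            simp only [expand]
        _ = (∑ i : Fin n, ∑ j : Fin n, lam j * x i ^ 2)
            + (∑ i : Fin n, ∑ j : Fin n, lam i * x j ^ 2)
            + ∑ i : Fin n, ∑ j : Fin n,
              (2 : ℝ) * ((Real.sqrt (lam i) * x i) * (Real.sqrt (lam j) * x j)) := by
            simp only [Finset.sum_add_distrib]
        _ = 2 * A + 2 * s ^ 2 := by rw [e1, e2, e3, sq]; ring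
    have hdiag : ∑ i : Fin n, (2 * (Real.sqrt (lam i) * x i)) ^ 2
        ≤ ∑ i, ∑ j, (Real.sqrt (lam j) * x i + Real.sqrt (lam i) * x j) ^ 2 := by
      refine Finset.sum_le_sum fun i _ => ?_
      have := Finset.single_le_sum
        (f := fun j => (Real.sqrt (lam j) * x i + Real.sqrt (lam i) * x j) ^ 2)
        (fun j _ => sq_nonneg _) (Finset.mem_univ i)
      calc (2 * (Real.sqrt (lam i) * x i)) ^ 2
          = (Real.sqrt (lam i) * x i + Real.sqrt (lam i) * x i) ^ 2 := by ring
        _ ≤ _ := this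
    have hdiag_eq : ∑ i : Fin n, (2 * (Real.sqrt (lam i) * x i)) ^ 2 = 4 * B := by
      rw [hB, Finset.mul_sum]
      refine Finset.sum_congr rfl fun i _ => ?_
      have h1 : Real.sqrt (lam i) ^ 2 = lam i := Real.sq_sqrt (hpos i)
      nlinarith [h1]
    rw [hdouble, hdiag_eq] at hdiag
    exact hdiag
  rcases le_total a (-1) with h | h
  · nlinarith [mul_nonneg (by linarith : (0:ℝ) ≤ a + 2) (by linarith : (0:ℝ) ≤ A - B),
      mul_nonneg (by linarith : (0:ℝ) ≤ -1 - a)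
        (by linarith : (0:ℝ) ≤ 2 * A + 2 * s ^ 2 - 4 * B),
      mul_nonneg (by linarith : (0:ℝ) ≤ a + c + 1) hS0]
  · nlinarith [mul_nonneg (by linarith : (0:ℝ) ≤ a + 1) (by linarith : (0:ℝ) ≤ A - s ^ 2),
      mul_nonneg (by linarith : (0:ℝ) ≤ -a) (by linarith : (0:ℝ) ≤ A - B),
      mul_nonneg (by linarith : (0:ℝ) ≤ a + c + 1) hS0]
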